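/- Consider a nontrivial one-variable equation (u0 X u1 ⋯ X un, v0 X v1 ⋯ X vn) over a real alphabet. Let s_i = σ(u0⋯u_{i−1}) and t_i = σ(v0⋯v_{i−1}) for 1 ≤ i ≤ n. If the equation has at least two zero-sum solutions, then (s1, ..., sn) is a permutation of (t1, ..., tn) (as multisets). -/

import Mathlib

/-- `assemble x [u₀, u₁, …, uₙ]` is the word `u₀ x u₁ x ⋯ x uₙ`. -/
def assemble (x : List ℝ) (cs : List (List ℝ)) : List ℝ :=
  (cs.intersperse x).flatten

namespace ZeroSumAux

variable {M : Type} [AddCommMonoid M]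

/-- The "prefix-sum polynomial" of a word, with respect to an additive weight `φ`. -/
noncomputable def PS (φ : List ℝ → M) (w : List ℝ) : AddMonoidAlgebra ℝ M :=
  ∑ j ∈ Finset.range w.length, AddMonoidAlgebra.single (φ (w.take j)) 1

lemma PS_nil (φ : List ℝ → M) : PS φ [] = 0 := by simp [PS]

variable {φ : List ℝ → M}

lemma PS_cons (hφ : ∀ a b : List ℝ, φ (a ++ b) = φ a + φ b) (hφ0 : φ [] = 0)
    (h : ℝ) (l : List ℝ) :
    PS φ (h :: l) = 1 + AddMonoidAlgebra.single (φ [h]) 1 * PS φ l := by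
  simp only [PS, List.length_cons]
  rw [Finset.sum_range_succ']
  have h1 : ∀ j ∈ Finset.range l.length,
      AddMonoidAlgebra.single (φ ((h :: l).take (j + 1))) (1 : ℝ)
        = AddMonoidAlgebra.single (φ [h]) 1 * AddMonoidAlgebra.single (φ (l.take j)) 1 := by
    intro j _
    rw [AddMonoidAlgebra.single_mul_single, one_mul, List.take_succ_cons,
      show (h :: l.take j) = [h] ++ l.take j from rfl, hφ]
  rw [Finset.sum_congr rfl h1, ← Finset.mul_sum, List.take_zero, hφ0,
    show AddMonoidAlgebra.single (0 : M) (1 : ℝ) = 1 from (AddMonoidAlgebra.one_def).symm,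
    add_comm]

lemma PS_append (hφ : ∀ a b : List ℝ, φ (a ++ b) = φ a + φ b) (hφ0 : φ [] = 0)
    (a b : List ℝ) :
    PS φ (a ++ b) = PS φ a + AddMonoidAlgebra.single (φ a) 1 * PS φ b := by
  induction a with
  | nil =>
      rw [List.nil_append, PS_nil, hφ0,
        show AddMonoidAlgebra.single (0 : M) (1 : ℝ) = 1 from (AddMonoidAlgebra.one_def).symm,
        zero_add, one_mul]
  | cons h t ih =>
      rw [List.cons_append, PS_cons hφ hφ0, ih, PS_cons hφ hφ0]
      have hAX : AddMonoidAlgebra.single (φ (h :: t)) (1 : ℝ)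
          = AddMonoidAlgebra.single (φ [h]) 1 * AddMonoidAlgebra.single (φ t) 1 := by
        rw [AddMonoidAlgebra.single_mul_single, one_mul,
          show (h :: t) = [h] ++ t from rfl, hφ]
      rw [hAX]; ring

lemma assemble_nil (x : List ℝ) : assemble x [] = [] := rfl

lemma assemble_single (x c : List ℝ) : assemble x [c] = c := by
  simp [assemble]

lemma assemble_cons_cons (x c d : List ℝ) (t : List (List ℝ)) :
    assemble x (c :: d :: t) = c ++ (x ++ assemble x (d :: t)) := by
  simp [assemble, List.intersperse_cons_cons]

/-- The sum of `single` at the accumulated weights before each occurrence of `x`. -/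
noncomputable def B (φ : List ℝ → M) (x : List ℝ) (cs : List (List ℝ)) :
    AddMonoidAlgebra ℝ M :=
  ∑ i ∈ Finset.range (cs.length - 1),
    AddMonoidAlgebra.single (φ ((cs.take (i + 1)).flatten) + i • φ x) 1

lemma B_cons (hφ : ∀ a b : List ℝ, φ (a ++ b) = φ a + φ b)
    (x c d : List ℝ) (t : List (List ℝ)) :
    B φ x (c :: d :: t)
      = AddMonoidAlgebra.single (φ c) 1
        + AddMonoidAlgebra.single (φ c + φ x) 1 * B φ x (d :: t) := by
  simp only [B, List.length_cons, Nat.add_sub_cancel]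
  rw [Finset.sum_range_succ']
  have hstep : ∀ i ∈ Finset.range t.length,
      AddMonoidAlgebra.single
          (φ (((c :: d :: t).take (i + 1 + 1)).flatten) + (i + 1) • φ x) (1 : ℝ)
        = AddMonoidAlgebra.single (φ c + φ x) 1
            * AddMonoidAlgebra.single (φ (((d :: t).take (i + 1)).flatten) + i • φ x) 1 := by
    intro i _
    rw [AddMonoidAlgebra.single_mul_single, one_mul, List.take_succ_cons, List.flatten_cons,
      hφ, succ_nsmul]
    congr 1
    abel
  rw [Finset.sum_congr rfl hstep, ← Finset.mul_sum]
  have h0 : (((c :: d :: t).take (0 + 1)).flatten) = c := by simp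
  rw [h0, zero_nsmul, add_zero, add_comm]

lemma PS_sub (hφ : ∀ a b : List ℝ, φ (a ++ b) = φ a + φ b) (hφ0 : φ [] = 0)
    (x y : List ℝ) (hxyφ : φ x = φ y) :
    ∀ cs : List (List ℝ),
      PS φ (assemble x cs) - PS φ (assemble y cs) = B φ x cs * (PS φ x - PS φ y) := by
  intro cs
  induction cs with
  | nil => simp [assemble_nil, PS_nil, B]
  | cons c cs' ih =>
      cases cs' with
      | nil => simp [assemble_single, B]
      | cons d t =>
          rw [assemble_cons_cons, assemble_cons_cons, PS_append hφ hφ0, PS_append hφ hφ0,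
            PS_append hφ hφ0, PS_append hφ hφ0, B_cons hφ, ← hxyφ]
          have hAX : AddMonoidAlgebra.single (φ c) (1 : ℝ) * AddMonoidAlgebra.single (φ x) 1
              = AddMonoidAlgebra.single (φ c + φ x) 1 := by
            rw [AddMonoidAlgebra.single_mul_single, one_mul]
          linear_combination
            (AddMonoidAlgebra.single (φ c) (1 : ℝ) * AddMonoidAlgebra.single (φ x) 1) * ih
              + (B φ x (d :: t) * (PS φ x - PS φ y)) * hAX

lemma B_eq [UniqueSums M] (hφ : ∀ a b : List ℝ, φ (a ++ b) = φ a + φ b) (hφ0 : φ [] = 0)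
    (us vs : List (List ℝ)) (x y : List ℝ) (hxyφ : φ x = φ y)
    (hPS : PS φ x ≠ PS φ y)
    (hx : assemble x us = assemble x vs) (hy : assemble y us = assemble y vs) :
    B φ x us = B φ x vs := by
  have h1 := PS_sub hφ hφ0 x y hxyφ us
  have h2 := PS_sub hφ hφ0 x y hxyφ vs
  rw [hx, hy] at h1
  have h3 : (B φ x us - B φ x vs) * (PS φ x - PS φ y) = 0 := by
    rw [sub_mul, ← h1, ← h2, sub_self]
  have hD : PS φ x - PS φ y ≠ 0 := sub_ne_zero_of_ne hPS
  have h4 := (mul_eq_zero.mp h3).resolve_right hD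
  exact sub_eq_zero.mp h4

lemma finsetsum_eq_listsum {A : Type*} [AddCommMonoid A] (n : ℕ) (h : ℕ → A) :
    ∑ i ∈ Finset.range n, h i = ((List.range n).map h).sum := by
  induction n with
  | zero => simp
  | succ n ih =>
      rw [Finset.sum_range_succ, List.range_succ, List.map_append, List.sum_append, ih]
      simp

lemma count_aux [DecidableEq M] (l : List M) (g : M) :
    ((l.map fun a => AddMonoidAlgebra.single a (1 : ℝ)).sum).coeff g = (l.count g : ℝ) := by
  induction l with
  | nil => simp
  | cons a t ih =>
      simp only [List.map_cons, List.sum_cons, List.count_cons]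
      rw [AddMonoidAlgebra.coeff_add, Finsupp.add_apply, ih, AddMonoidAlgebra.coeff_single,
        Finsupp.single_apply]
      by_cases hag : a = g
      · simp [hag, add_comm]
      · simp [hag, Ne.symm hag]

lemma multiset_eq [DecidableEq M] (n : ℕ) (f g : ℕ → M)
    (h : ∑ i ∈ Finset.range n, AddMonoidAlgebra.single (f i) (1 : ℝ)
        = ∑ i ∈ Finset.range n, AddMonoidAlgebra.single (g i) 1) :
    (((List.range n).map f : List M) : Multiset M) = ((List.range n).map g : List M) := by
  rw [finsetsum_eq_listsum, finsetsum_eq_listsum] at h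
  have hcount : ∀ m : M, ((List.range n).map f).count m = ((List.range n).map g).count m := by
    intro m
    have hf := count_aux ((List.range n).map f) m
    have hg := count_aux ((List.range n).map g) m
    rw [List.map_map] at hf hg
    have hr : (((List.range n).map f).count m : ℝ) = (((List.range n).map g).count m : ℝ) := by
      rw [← hf, ← hg]
      simp only [Function.comp_def]
      rw [h]
    exact_mod_cast hr
  exact Multiset.coe_eq_coe.mpr (List.perm_iff_count.mpr hcount)

/-- Total mass of coefficients. -/
noncomputable def mass : AddMonoidAlgebra ℝ M →+ ℝ :=
  (Finsupp.liftAddHom fun _ => AddMonoidHom.id ℝ).comp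
    (AddMonoidAlgebra.coeffAddEquiv (R := ℝ) (M := M)).toAddMonoidHom

lemma mass_PS (φ : List ℝ → M) (w : List ℝ) : mass (PS φ w) = (w.length : ℝ) := by
  rw [PS, map_sum]
  have h1 : ∀ j ∈ Finset.range w.length,
      mass (AddMonoidAlgebra.single (φ (w.take j)) (1 : ℝ)) = 1 := by
    intro j _
    show (Finsupp.liftAddHom fun _ => AddMonoidHom.id ℝ) (Finsupp.single (φ (w.take j)) (1 : ℝ)) = 1
    rw [Finsupp.liftAddHom_apply_single]
    rfl
  rw [Finset.sum_congr rfl h1, Finset.sum_const, Finset.card_range, nsmul_eq_mul, mul_one]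

/-- The two-component weight: (letter sum, length). -/
noncomputable def φ2 : List ℝ → ℝ × ℝ := fun w => (w.sum, (w.length : ℝ))

lemma φ2_add : ∀ a b : List ℝ, φ2 (a ++ b) = φ2 a + φ2 b := by
  intro a b
  simp [φ2, Prod.ext_iff]

lemma φ2_nil : φ2 [] = 0 := by simp [φ2, Prod.ext_iff]

lemma coeff_PS2 (w : List ℝ) (p : ℝ × ℝ) :
    (PS φ2 w).coeff p
      = ∑ j' ∈ Finset.range w.length, (if (φ2 (w.take j')) = p then (1 : ℝ) else 0) := by
  rw [PS, AddMonoidAlgebra.coeff_sum, Finset.sum_apply']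
  refine Finset.sum_congr rfl fun j' _ => ?_
  rw [AddMonoidAlgebra.coeff_single, Finsupp.single_apply]

lemma eq_of_PS2_eq (x y : List ℝ) (hl : x.length = y.length) (hs : x.sum = y.sum)
    (hP : PS φ2 x = PS φ2 y) : x = y := by
  have hsums : ∀ j : ℕ, j ≤ x.length → (x.take j).sum = (y.take j).sum := by
    intro j hj
    rcases lt_or_eq_of_le hj with hjlt | hjeq
    · have hx1 : (PS φ2 x).coeff ((x.take j).sum, (j : ℝ)) = 1 := by
        rw [coeff_PS2, Finset.sum_eq_single j]
        · rw [if_pos]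
          have hlenj : (x.take j).length = j := by
            rw [List.length_take]; exact inf_eq_left.mpr (le_of_lt hjlt)
          simp [φ2, hlenj]
        · intro j' hj' hne
          have hlen' : ((x.take j').length : ℝ) ≠ (j : ℝ) := by
            have h1 : (x.take j').length = j' := by
              rw [List.length_take]
              exact inf_eq_left.mpr (le_of_lt (Finset.mem_range.mp hj'))
            rw [h1]; exact_mod_cast hne
          rw [if_neg]
          intro hcontra
          exact hlen' (by simpa [φ2] using congrArg Prod.snd hcontra)
        · intro habs
          exact absurd (Finset.mem_range.mpr hjlt) habs
      have hy1 : (PS φ2 y).coeff ((x.take j).sum, (j : ℝ)) =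
          (if (y.take j).sum = (x.take j).sum then (1 : ℝ) else 0) := by
        rw [coeff_PS2, Finset.sum_eq_single j]
        · have hleny : (y.take j).length = j := by
            rw [List.length_take]; exact inf_eq_left.mpr (le_of_lt (hl ▸ hjlt))
          have hcond : (φ2 (y.take j) = ((x.take j).sum, (j : ℝ)))
              ↔ ((y.take j).sum = (x.take j).sum) := by
            simp [φ2, Prod.ext_iff, hleny]
          rw [if_congr hcond rfl rfl]
        · intro j' hj' hne
          have hlen' : ((y.take j').length : ℝ) ≠ (j : ℝ) := by
            have h1 : (y.take j').length = j' := by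
              rw [List.length_take]
              exact inf_eq_left.mpr (le_of_lt (Finset.mem_range.mp hj'))
            rw [h1]; exact_mod_cast hne
          rw [if_neg]
          intro hcontra
          exact hlen' (by simpa [φ2] using congrArg Prod.snd hcontra)
        · intro habs
          exact absurd (Finset.mem_range.mpr (hl ▸ hjlt)) habs
      rw [hP, hy1] at hx1
      by_contra hne
      rw [if_neg fun hh => hne hh.symm] at hx1
      exact one_ne_zero hx1.symm
    · have h1 : x.take j = x := by rw [hjeq, List.take_length]
      have h2 : y.take j = y := by rw [hjeq, hl, List.take_length]
      rw [h1, h2]; exact hs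
  exact List.eq_of_sum_take_eq hl hsums

end ZeroSumAux

open ZeroSumAux in
/-- for a nontrivial one-variable equation
`u₀ X u₁ ⋯ X uₙ = v₀ X v₁ ⋯ X vₙ` (n ≥ 1) with at least two zero-sum
solutions, the tuple (s₁, …, sₙ) with sᵢ = σ(u₀⋯u_{i−1}) is a permutation of
(t₁, …, tₙ) with tᵢ = σ(v₀⋯v_{i−1}). -/
theorem prefix_sums_permutation
    (us vs : List (List ℝ)) (hlen : us.length = vs.length) (hn : 2 ≤ us.length)
    (hnontriv : us ≠ vs)
    (x y : List ℝ) (hxy : x ≠ y) (hxs : x.sum = 0) (hys : y.sum = 0)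
    (hx : assemble x us = assemble x vs) (hy : assemble y us = assemble y vs) :
    (((List.range (us.length - 1)).map
        fun i => ((us.take (i + 1)).flatten).sum : List ℝ) : Multiset ℝ) =
    (((List.range (us.length - 1)).map
        fun i => ((vs.take (i + 1)).flatten).sum : List ℝ) : Multiset ℝ) := by
  classical
  by_cases hl : x.length = y.length
  · -- equal lengths: use φ2 w = (w.sum, w.length)
    have hxyφ : φ2 x = φ2 y := by
      simp [φ2, Prod.ext_iff, hxs, hys, hl]
    have hPS : PS φ2 x ≠ PS φ2 y := by
      intro hP
      exact hxy (eq_of_PS2_eq x y hl (hxs.trans hys.symm) hP)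
    have key := B_eq φ2_add φ2_nil us vs x y hxyφ hPS hx hy
    unfold B at key
    rw [← hlen] at key
    have hmul := multiset_eq (us.length - 1) _ _ key
    have hmap := congrArg (Multiset.map Prod.fst) hmul
    simp only [Multiset.map_coe, List.map_map, Function.comp_def] at hmap
    simpa [φ2, Prod.ext_iff, hxs, smul_zero] using hmap
  · -- different lengths: use φ = List.sum
    have hxyφ : x.sum = y.sum := by rw [hxs, hys]
    have hφ : ∀ a b : List ℝ, (a ++ b).sum = a.sum + b.sum := by
      intro a b; simp
    have hφ0 : List.sum ([] : List ℝ) = 0 := rfl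
    have hPS : PS (List.sum : List ℝ → ℝ) x ≠ PS List.sum y := by
      intro hP
      apply hl
      have hm := congrArg (mass (M := ℝ)) hP
      rw [mass_PS, mass_PS] at hm
      exact_mod_cast hm
    have key := B_eq hφ hφ0 us vs x y hxyφ hPS hx hy
    unfold B at key
    rw [← hlen] at key
    have hmul := multiset_eq (us.length - 1) _ _ key
    simpa [hxs, smul_zero] using hmul
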